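/- Assume E(T^2) < ∞. Then for every n ≥ 1, E(|W^p_n|^2) = n·E(T^2) − E(T)^2·( n/d + ((2d−1)/(2d^2))·[ (−1/(2d−1))^n − 1 ] ). -/

import Mathlib

open MeasureTheory ProbabilityTheory Filter

noncomputable section

/-- The `2d` unit vectors `±e_i` of `ℤ^d ⊆ ℝ^d`. -/
def unitVecs (d : ℕ) : Set (EuclideanSpace ℝ (Fin d)) :=
  {v | ∃ i : Fin d, v = EuclideanSpace.single i 1 ∨ v = EuclideanSpace.single i (-1)}

/-- The random times `τ_n = T_1 + ⋯ + T_n` (with `τ_0 = 0`). -/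
def tauT {Ω : Type} (T : ℕ → Ω → ℕ) (n : ℕ) (ω : Ω) : ℕ :=
  ∑ k ∈ Finset.Icc 1 n, T k ω

/-- The inverse time change `τ⁻¹_n = inf {m ≥ 1 : τ_m ≥ n}`. -/
def tauInv {Ω : Type} (T : ℕ → Ω → ℕ) (n : ℕ) (ω : Ω) : ℕ :=
  sInf {m : ℕ | 1 ≤ m ∧ n ≤ tauT T m ω}

/-- The σ-field `F_k = σ(D_1, T_1, …, D_k, T_k)`. -/
def walkSigma {Ω β : Type} [MeasurableSpace Ω] [MeasurableSpace β]
    (D : ℕ → Ω → β) (T : ℕ → Ω → ℕ) (k : ℕ) : MeasurableSpace Ω :=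
  ⨆ m ∈ Finset.Icc 1 k,
    (MeasurableSpace.comap (D m) inferInstance ⊔ MeasurableSpace.comap (T m) inferInstance)

/-- The filtration `(F_{n+1})_{n ≥ 0}`, i.e. `(F_n)_{n ≥ 1}` reindexed from `0`. -/
def walkFiltration {Ω β : Type} [m0 : MeasurableSpace Ω] [MeasurableSpace β]
    (D : ℕ → Ω → β) (T : ℕ → Ω → ℕ)
    (measD : ∀ m, Measurable (D m)) (measT : ∀ m, Measurable (T m)) :
    Filtration ℕ m0 where
  seq n := walkSigma D T (n + 1)
  mono' := by
    intro i j hij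
    refine iSup_le fun m => iSup_le fun hm => ?_
    refine le_iSup₂_of_le m ?_ le_rfl
    simp only [Finset.mem_Icc] at hm ⊢
    omega
  le' := by
    intro n
    refine iSup_le fun m => iSup_le fun _ => sup_le ?_ ?_
    · exact (measD m).comap_le
    · exact (measT m).comap_le

section helpers
variable {Ω β : Type}

theorem tauT_mono (T : ℕ → Ω → ℕ) (ω : Ω) : Monotone fun m => tauT T m ω := by
  intro a b hab
  exact Finset.sum_le_sum_of_subset (Finset.Icc_subset_Icc_right hab)

theorem self_le_tauT (T : ℕ → Ω → ℕ) (T_pos : ∀ m ω, 1 ≤ T m ω) (n : ℕ) (ω : Ω) :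
    n ≤ tauT T n ω := by
  calc n = ∑ _k ∈ Finset.Icc 1 n, 1 := by simp
  _ ≤ tauT T n ω := Finset.sum_le_sum fun k _ => T_pos k ω

theorem tauInv_le_iff (T : ℕ → Ω → ℕ) (T_pos : ∀ m ω, 1 ≤ T m ω) (n k : ℕ) (hk : 1 ≤ k) :
    {ω | tauInv T n ω ≤ k} = {ω | n ≤ tauT T k ω} := by
  ext ω
  simp only [Set.mem_setOf_eq, tauInv]
  constructor
  · intro hle
    rcases Nat.eq_zero_or_pos n with hn | hn
    · omega
    · have hne : {m : ℕ | 1 ≤ m ∧ n ≤ tauT T m ω}.Nonempty :=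
        ⟨n, hn, self_le_tauT T T_pos n ω⟩
      obtain ⟨h1, h2⟩ := Nat.sInf_mem hne
      exact le_trans h2 (tauT_mono T ω hle)
  · intro hle
    exact Nat.sInf_le ⟨hk, hle⟩

theorem measurable_tauT_walkSigma [MeasurableSpace Ω] [MeasurableSpace β]
    (D : ℕ → Ω → β) (T : ℕ → Ω → ℕ) (k : ℕ) :
    Measurable[walkSigma D T k] (tauT T k) := by
  apply Finset.measurable_sum
  intro m hm
  refine measurable_iff_comap_le.2 (le_trans ?_ (le_iSup₂_of_le m hm le_rfl))
  exact le_sup_right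

theorem measurableSet_tauInv_le [MeasurableSpace Ω] [MeasurableSpace β]
    (D : ℕ → Ω → β) (T : ℕ → Ω → ℕ) (T_pos : ∀ m ω, 1 ≤ T m ω) (n k : ℕ) (hk : 1 ≤ k) :
    MeasurableSet[walkSigma D T k] {ω | tauInv T n ω ≤ k} := by
  rw [tauInv_le_iff T T_pos n k hk]
  exact measurable_tauT_walkSigma D T k measurableSet_Ici

end helpers

/-- The σ-field `{A : A ∩ {σ ≤ k} ∈ F_k for all k = 1, …, n}` associated with a
random time `σ` bounded by `n`. -/
def stoppedSigma {Ω : Type} (F : ℕ → MeasurableSpace Ω) (σf : Ω → ℕ) (n : ℕ)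
    (h : ∀ k, 1 ≤ k → k ≤ n → MeasurableSet[F k] {ω | σf ω ≤ k}) : MeasurableSpace Ω where
  MeasurableSet' A := ∀ k, 1 ≤ k → k ≤ n → MeasurableSet[F k] (A ∩ {ω | σf ω ≤ k})
  measurableSet_empty := fun k _ _ => by
    simp
  measurableSet_compl := fun A hA k hk1 hk2 => by
    have hs : MeasurableSet[F k] {ω | σf ω ≤ k} := h k hk1 hk2
    have heq : Aᶜ ∩ {ω | σf ω ≤ k} = {ω | σf ω ≤ k} \ (A ∩ {ω | σf ω ≤ k}) := by
      ext ω; by_cases hω : σf ω ≤ k <;> simp [hω]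
    rw [heq]
    exact hs.diff (hA k hk1 hk2)
  measurableSet_iUnion := fun s hs k hk1 hk2 => by
    rw [Set.iUnion_inter]
    exact MeasurableSet.iUnion fun i => hs i k hk1 hk2

/-- The σ-field `F_{τ⁻¹_n} = {A : A ∩ {τ⁻¹_n ≤ k} ∈ F_k for all k = 1, …, n}`. -/
def Fstop {Ω β : Type} [MeasurableSpace Ω] [MeasurableSpace β]
    (D : ℕ → Ω → β) (T : ℕ → Ω → ℕ) (T_pos : ∀ m ω, 1 ≤ T m ω) (n : ℕ) :
    MeasurableSpace Ω :=
  stoppedSigma (walkSigma D T) (tauInv T n) n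
    (fun k hk1 _ => measurableSet_tauInv_le D T T_pos n k hk1)

/-- Setup for the persistent time-changed walk: i.i.d. times `(T_m)_{m ≥ 1}` with values in
`{1, 2, …}`, directions `(D_m)_{m ≥ 1}` forming the persistent Markov chain on the `2d` unit
vectors (uniform start, each next direction uniform among the `2d - 1` directions different
from the previous one), independent of the times. The law of the direction sequence is
specified through its path probabilities. -/
structure PersistentWalk (d : ℕ) (Ω : Type) [MeasurableSpace Ω] (μ : Measure Ω) where
  T : ℕ → Ω → ℕ
  D : ℕ → Ω → EuclideanSpace ℝ (Fin d)
  measT : ∀ m, Measurable (T m)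
  measD : ∀ m, Measurable (D m)
  T_pos : ∀ m ω, 1 ≤ T m ω
  T_iid : iIndepFun (fun m : ℕ => T (m + 1)) μ
  T_ident : ∀ m : ℕ, IdentDistrib (T (m + 1)) (T 1) μ μ
  D_mem : ∀ m ω, D m ω ∈ unitVecs d
  D_path : ∀ n : ℕ, 1 ≤ n → ∀ v : ℕ → EuclideanSpace ℝ (Fin d),
    (∀ m, v m ∈ unitVecs d) →
    (∀ m, 1 ≤ m → m + 1 ≤ n → v (m + 1) ≠ v m) →
    μ {ω | ∀ m, 1 ≤ m → m ≤ n → D m ω = v m}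
      = ENNReal.ofReal ((2 * (d : ℝ))⁻¹ * ((2 * (d : ℝ) - 1)⁻¹) ^ (n - 1))
  DT_indep : IndepFun (fun ω m => D m ω) (fun ω m => T m ω) μ

namespace PersistentWalk

variable {d : ℕ} {Ω : Type} [MeasurableSpace Ω] {μ : Measure Ω}

/-- The persistent time-changed walk `W^p_n = ∑_{m=1}^n D_m T_m`. -/
def W (Wk : PersistentWalk d Ω μ) (n : ℕ) (ω : Ω) : EuclideanSpace ℝ (Fin d) :=
  ∑ m ∈ Finset.Icc 1 n, (Wk.T m ω : ℝ) • Wk.D m ω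

/-- The expectation `E(T)` of the generic time. -/
def ET (Wk : PersistentWalk d Ω μ) : ℝ := ∫ ω, (Wk.T 1 ω : ℝ) ∂μ

/-- The second moment `E(T²)` of the generic time. -/
def ET2 (Wk : PersistentWalk d Ω μ) : ℝ := ∫ ω, (Wk.T 1 ω : ℝ) ^ 2 ∂μ

/-- The diffusion constant `C^p = (d E(T²) - E(T)²)/d`. -/
def Cp (Wk : PersistentWalk d Ω μ) : ℝ := ((d : ℝ) * Wk.ET2 - Wk.ET ^ 2) / d

/-- The martingale `M^p_n = W^p_n - (E(T)/(2d)) D_n`. -/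
def M (Wk : PersistentWalk d Ω μ) (n : ℕ) (ω : Ω) : EuclideanSpace ℝ (Fin d) :=
  Wk.W n ω - (Wk.ET / (2 * d)) • Wk.D n ω

/-- The senile persistent random walk
`S^p_n = W^p_{τ⁻¹_n} + D_{τ⁻¹_n} (n - τ_{τ⁻¹_n})`, with `S^p_0 = 0`. -/
def S (Wk : PersistentWalk d Ω μ) (n : ℕ) (ω : Ω) : EuclideanSpace ℝ (Fin d) :=
  if n = 0 then 0 else
    Wk.W (tauInv Wk.T n ω) ω
      + ((n : ℝ) - (tauT Wk.T (tauInv Wk.T n ω) ω : ℝ)) • Wk.D (tauInv Wk.T n ω) ω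

end PersistentWalk

open Classical in
/-- The finset of the 2d unit vectors. -/
def EV (d : ℕ) : Finset (EuclideanSpace ℝ (Fin d)) :=
  (Finset.univ.image fun i : Fin d => EuclideanSpace.single i (1:ℝ)) ∪
  (Finset.univ.image fun i : Fin d => EuclideanSpace.single i (-1:ℝ))

lemma mem_EV {d : ℕ} {v : EuclideanSpace ℝ (Fin d)} : v ∈ EV d ↔ v ∈ unitVecs d := by
  simp only [EV, Finset.mem_union, Finset.mem_image, Finset.mem_univ, true_and, unitVecs,
    Set.mem_setOf_eq]
  constructor
  · rintro (⟨i, hi⟩ | ⟨i, hi⟩) <;> exact ⟨i, by simp [hi.symm]⟩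
  · rintro ⟨i, hi | hi⟩
    · exact Or.inl ⟨i, hi.symm⟩
    · exact Or.inr ⟨i, hi.symm⟩

lemma single_one_ne_single_neg {d : ℕ} (i j : Fin d) :
    EuclideanSpace.single i (1:ℝ) ≠ EuclideanSpace.single j (-1:ℝ) := by
  intro h
  have h2 := congrArg (fun x => x i) h
  simp only [EuclideanSpace.single_apply, if_pos rfl] at h2
  split_ifs at h2 <;> norm_num at h2

lemma single_inj {d : ℕ} (a : ℝ) (ha : a ≠ 0) :
    Function.Injective (fun i : Fin d => EuclideanSpace.single i a) := by
  intro i j h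
  by_contra hne
  have h2 := congrArg (fun x => x i) h
  simp [EuclideanSpace.single_apply, hne] at h2
  exact ha h2

lemma EV_card {d : ℕ} : (EV d).card = 2 * d := by
  classical
  rw [EV, Finset.card_union_of_disjoint, Finset.card_image_of_injective _ (single_inj 1 one_ne_zero),
    Finset.card_image_of_injective _ (single_inj (-1) (by norm_num))]
  · simp; ring
  · rw [Finset.disjoint_left]
    rintro v hv hv'
    simp only [Finset.mem_image, Finset.mem_univ, true_and] at hv hv'
    obtain ⟨i, hi⟩ := hv; obtain ⟨j, hj⟩ := hv'
    exact single_one_ne_single_neg i j (hi.trans hj.symm)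

lemma norm_of_mem_EV {d : ℕ} {v : EuclideanSpace ℝ (Fin d)} (hv : v ∈ EV d) : ‖v‖ = 1 := by
  rcases mem_EV.1 hv with ⟨i, hi | hi⟩ <;> rw [hi, EuclideanSpace.norm_single] <;> norm_num

lemma inner_self_EV {d : ℕ} {v : EuclideanSpace ℝ (Fin d)} (hv : v ∈ EV d) :
    (inner ℝ v v : ℝ) = 1 := by
  rw [real_inner_self_eq_norm_sq, norm_of_mem_EV hv]; norm_num

lemma zero_not_mem_EV {d : ℕ} : (0 : EuclideanSpace ℝ (Fin d)) ∉ EV d := by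
  intro h
  have := norm_of_mem_EV h
  simp at this

lemma sum_inner_EV {d : ℕ} (u : EuclideanSpace ℝ (Fin d)) :
    ∑ w ∈ EV d, (inner ℝ u w : ℝ) = 0 := by
  classical
  rw [EV, Finset.sum_union, Finset.sum_image (fun i _ j _ h => single_inj 1 one_ne_zero h),
    Finset.sum_image (fun i _ j _ h => single_inj (-1) (by norm_num) h)]
  · simp only [EuclideanSpace.inner_single_right]
    simp [← Finset.sum_add_distrib]
  · rw [Finset.disjoint_left]
    rintro v hv hv'
    simp only [Finset.mem_image, Finset.mem_univ, true_and] at hv hv'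
    obtain ⟨i, hi⟩ := hv; obtain ⟨j, hj⟩ := hv'
    exact single_one_ne_single_neg i j (hi.trans hj.symm)

attribute [local instance] Classical.propDecidable

/-- Admissible direction paths of length `k`, as functions `ℕ → ℝ^d` that vanish
outside `[1, k]`. -/
def paths (d : ℕ) : ℕ → Finset (ℕ → EuclideanSpace ℝ (Fin d))
  | 0 => {fun _ => 0}
  | (k+1) => (paths d k).biUnion fun v =>
      ((EV d).erase (v k)).image fun w => Function.update v (k+1) w

lemma paths_spec {d : ℕ} : ∀ k, ∀ v ∈ paths d k,
    (∀ n, n ∈ Finset.Icc 1 k → v n ∈ EV d) ∧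
    (∀ n, n ∉ Finset.Icc 1 k → v n = 0) ∧
    (∀ m, 1 ≤ m → m + 1 ≤ k → v (m+1) ≠ v m) := by
  intro k
  induction k with
  | zero =>
    intro v hv
    simp only [paths, Finset.mem_singleton] at hv
    subst hv
    refine ⟨fun n hn => by simp at hn, fun n _ => rfl, fun m hm hm' => by omega⟩
  | succ k ih =>
    intro v hv
    simp only [paths, Finset.mem_biUnion, Finset.mem_image, Finset.mem_erase] at hv
    obtain ⟨u, hu, w, ⟨hwne, hwEV⟩, rfl⟩ := hv
    obtain ⟨h1, h2, h3⟩ := ih u hu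
    refine ⟨?_, ?_, ?_⟩
    · intro n hn
      rcases eq_or_ne n (k+1) with rfl | hne
      · simpa [Function.update_self] using hwEV
      · rw [Function.update_of_ne hne]
        exact h1 n (by simp at hn ⊢; omega)
    · intro n hn
      have hne : n ≠ k + 1 := by simp at hn; omega
      rw [Function.update_of_ne hne]
      exact h2 n (by simp at hn ⊢; omega)
    · intro m hm hm'
      rcases eq_or_ne (m+1) (k+1) with he | hne
      · have : m = k := by omega
        subst this
        rw [Function.update_self, Function.update_of_ne (by omega)]
        exact hwne
      · rw [Function.update_of_ne hne, Function.update_of_ne (by omega)]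
        exact h3 m hm (by omega)

lemma paths_zero_out {d : ℕ} {k : ℕ} {v : ℕ → EuclideanSpace ℝ (Fin d)} (hv : v ∈ paths d k)
    {n : ℕ} (hn : n ∉ Finset.Icc 1 k) : v n = 0 := (paths_spec k v hv).2.1 n hn

lemma paths_mem_EV {d : ℕ} {k : ℕ} {v : ℕ → EuclideanSpace ℝ (Fin d)} (hv : v ∈ paths d k)
    {n : ℕ} (hn : n ∈ Finset.Icc 1 k) : v n ∈ EV d := (paths_spec k v hv).1 n hn

/-- Two distinct paths differ somewhere in `[1, k]`. -/
lemma paths_ext {d : ℕ} {k : ℕ} {u v : ℕ → EuclideanSpace ℝ (Fin d)}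
    (hu : u ∈ paths d k) (hv : v ∈ paths d k)
    (h : ∀ n ∈ Finset.Icc 1 k, u n = v n) : u = v := by
  funext n
  by_cases hn : n ∈ Finset.Icc 1 k
  · exact h n hn
  · rw [paths_zero_out hu hn, paths_zero_out hv hn]

lemma erase_card_paths {d : ℕ} {k : ℕ} {v : ℕ → EuclideanSpace ℝ (Fin d)}
    (hv : v ∈ paths d k) : ((EV d).erase (v k)).card = if k = 0 then 2 * d else 2 * d - 1 := by
  split_ifs with hk
  · subst hk
    rw [Finset.erase_eq_of_notMem, EV_card]
    rw [paths_zero_out hv (by simp)]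
    exact zero_not_mem_EV
  · rw [Finset.card_erase_of_mem (paths_mem_EV hv (by simp; omega)), EV_card]

lemma update_inj_on_paths {d : ℕ} {k : ℕ} {u v : ℕ → EuclideanSpace ℝ (Fin d)}
    (hu : u ∈ paths d k) (hv : v ∈ paths d k) {w w' : EuclideanSpace ℝ (Fin d)}
    (h : Function.update u (k+1) w = Function.update v (k+1) w') : u = v ∧ w = w' := by
  constructor
  · refine paths_ext hu hv fun n hn => ?_
    have hne : n ≠ k + 1 := by simp at hn; omega
    have := congrFun h n
    rwa [Function.update_of_ne hne, Function.update_of_ne hne] at this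
  · have := congrFun h (k+1)
    rwa [Function.update_self, Function.update_self] at this

lemma paths_pairwise_disjoint {d : ℕ} (k : ℕ) :
    ∀ u ∈ paths d k, ∀ v ∈ paths d k, u ≠ v →
      Disjoint (((EV d).erase (u k)).image fun w => Function.update u (k+1) w)
        (((EV d).erase (v k)).image fun w => Function.update v (k+1) w) := by
  classical
  intro u hu v hv huv
  rw [Finset.disjoint_left]
  rintro x hx hx'
  simp only [Finset.mem_image] at hx hx'
  obtain ⟨w, _, rfl⟩ := hx
  obtain ⟨w', _, hw'⟩ := hx'
  exact huv (update_inj_on_paths hu hv hw'.symm).1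

lemma paths_card {d : ℕ} : ∀ k, 1 ≤ k → (paths d k).card = 2 * d * (2 * d - 1) ^ (k - 1) := by
  intro k
  induction k with
  | zero => omega
  | succ k ih =>
    intro _
    rw [paths, Finset.card_biUnion (paths_pairwise_disjoint k)]
    have : ∀ v ∈ paths d k, (((EV d).erase (v k)).image
        fun w => Function.update v (k+1) w).card = if k = 0 then 2 * d else 2 * d - 1 := by
      intro v hv
      rw [Finset.card_image_of_injOn, erase_card_paths hv]
      intro w hw w' hw' h
      exact (update_inj_on_paths hv hv h).2
    rw [Finset.sum_congr rfl this]
    rcases Nat.eq_zero_or_pos k with rfl | hk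
    · simp [paths]
    · rw [Finset.sum_const, ih hk]
      simp only [if_neg (by omega : ¬ k = 0), smul_eq_mul]
      have : k + 1 - 1 = (k - 1) + 1 := by omega
      rw [this, pow_succ]
      ring

/-- Key combinatorial identity: sum of `⟪v m, v (m+j)⟫` over admissible paths. -/
lemma paths_inner_sum {d : ℕ} (m : ℕ) (hm : 1 ≤ m) : ∀ j : ℕ,
    ∑ v ∈ paths d (m + j), (inner ℝ (v m) (v (m + j)) : ℝ)
      = (-1) ^ j * ((paths d m).card : ℝ) := by
  intro j
  induction j with
  | zero =>
    simp only [Nat.add_zero, pow_zero, one_mul]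
    rw [Finset.sum_congr rfl fun v hv => inner_self_EV (paths_mem_EV hv (by simp; omega))]
    simp
  | succ j ih =>
    have hstep : m + (j + 1) = (m + j) + 1 := by omega
    rw [hstep]
    show ∑ v ∈ paths d ((m+j)+1), (inner ℝ (v m) (v ((m+j)+1)) : ℝ) = _
    rw [paths, Finset.sum_biUnion (paths_pairwise_disjoint (m+j))]
    have hterm : ∀ v ∈ paths d (m+j),
        ∑ x ∈ ((EV d).erase (v (m+j))).image (fun w => Function.update v ((m+j)+1) w),
          (inner ℝ (x m) (x ((m+j)+1)) : ℝ)
        = - (inner ℝ (v m) (v (m+j)) : ℝ) := by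
      intro v hv
      rw [Finset.sum_image fun w hw w' hw' h => (update_inj_on_paths hv hv h).2]
      have : ∀ w ∈ (EV d).erase (v (m+j)),
          (inner ℝ (Function.update v ((m+j)+1) w m) (Function.update v ((m+j)+1) w ((m+j)+1)) : ℝ)
          = (inner ℝ (v m) w : ℝ) := by
        intro w hw
        rw [Function.update_self, Function.update_of_ne (by omega)]
      rw [Finset.sum_congr rfl this, Finset.sum_erase_eq_sub (paths_mem_EV hv (by simp; omega)),
        sum_inner_EV]
      ring
    rw [Finset.sum_congr rfl hterm, Finset.sum_neg_distrib, ih]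
    ring

section MeasureLayer
variable {d : ℕ} {Ω : Type} [MeasurableSpace Ω] {μ : Measure Ω}

/-- The event that the directions follow the path `v` up to time `k`. -/
def Aset (Wk : PersistentWalk d Ω μ) (v : ℕ → EuclideanSpace ℝ (Fin d)) (k : ℕ) : Set Ω :=
  {ω | ∀ i, 1 ≤ i → i ≤ k → Wk.D i ω = v i}

lemma measurableSet_Aset (Wk : PersistentWalk d Ω μ) (v : ℕ → EuclideanSpace ℝ (Fin d))
    (k : ℕ) : MeasurableSet (Aset Wk v k) := by
  have : Aset Wk v k = ⋂ i ∈ Finset.Icc 1 k, Wk.D i ⁻¹' {v i} := by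
    ext ω
    constructor
    · intro h
      simp only [Set.mem_iInter]
      intro i hi
      simp only [Finset.mem_Icc] at hi
      exact h i hi.1 hi.2
    · intro h i h1 h2
      exact Set.mem_iInter₂.1 h i (Finset.mem_Icc.2 ⟨h1, h2⟩)
  rw [this]
  exact MeasurableSet.iInter fun i => MeasurableSet.iInter fun _ =>
    (Wk.measD i) (measurableSet_singleton _)

lemma norm_D_eq_one (Wk : PersistentWalk d Ω μ) (m : ℕ) (ω : Ω) : ‖Wk.D m ω‖ = 1 :=
  norm_of_mem_EV (mem_EV.2 (Wk.D_mem m ω))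

lemma prob_Aset (hd : 1 ≤ d) (Wk : PersistentWalk d Ω μ) {k : ℕ} (hk : 1 ≤ k)
    {v : ℕ → EuclideanSpace ℝ (Fin d)} (hv : v ∈ paths d k) :
    μ (Aset Wk v k) = ENNReal.ofReal ((2 * (d : ℝ))⁻¹ * ((2 * (d : ℝ) - 1)⁻¹) ^ (k - 1)) := by
  classical
  set e1 : EuclideanSpace ℝ (Fin d) := EuclideanSpace.single ⟨0, hd⟩ 1 with he1
  set v' : ℕ → EuclideanSpace ℝ (Fin d) :=
    fun n => if n ∈ Finset.Icc 1 k then v n else e1 with hv'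
  have hAe : {ω | ∀ m, 1 ≤ m → m ≤ k → Wk.D m ω = v' m} = Aset Wk v k := by
    ext ω
    simp only [Aset, Set.mem_setOf_eq]
    refine forall_congr' fun m => ?_
    have hveq : v' m = v m ∨ ¬(1 ≤ m ∧ m ≤ k) := by
      by_cases hm : 1 ≤ m ∧ m ≤ k
      · exact Or.inl (by simp [hv', Finset.mem_Icc, hm.1, hm.2])
      · exact Or.inr hm
    rcases hveq with he | hne
    · rw [he]
    · constructor <;> intro _ h1 h2 <;> exact absurd ⟨h1, h2⟩ hne
  rw [← hAe]
  refine Wk.D_path k hk v' ?_ ?_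
  · intro m
    by_cases hm : m ∈ Finset.Icc 1 k
    · rw [hv']; simp only [if_pos hm]
      exact mem_EV.1 (paths_mem_EV hv hm)
    · rw [hv']; simp only [if_neg hm]
      exact ⟨⟨0, hd⟩, Or.inl rfl⟩
  · intro m h1 h2
    have hm1 : m ∈ Finset.Icc 1 k := by simp; omega
    have hm2 : m + 1 ∈ Finset.Icc 1 k := by simp; omega
    rw [hv']
    simp only [if_pos hm1, if_pos hm2]
    exact (paths_spec k v hv).2.2 m h1 h2

lemma Aset_disjoint (Wk : PersistentWalk d Ω μ) {k : ℕ}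
    {u v : ℕ → EuclideanSpace ℝ (Fin d)} (hu : u ∈ paths d k) (hv : v ∈ paths d k)
    (huv : u ≠ v) : Disjoint (Aset Wk u k) (Aset Wk v k) := by
  rw [Set.disjoint_left]
  rintro ω hωu hωv
  refine huv (paths_ext hu hv fun n hn => ?_)
  simp only [Finset.mem_Icc] at hn
  rw [← hωu n hn.1 hn.2, ← hωv n hn.1 hn.2]

lemma union_Aset_ae [IsProbabilityMeasure μ] (hd : 1 ≤ d) (Wk : PersistentWalk d Ω μ)
    {k : ℕ} (hk : 1 ≤ k) : μ (⋃ v ∈ paths d k, Aset Wk v k) = 1 := by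
  classical
  rw [measure_biUnion_finset ?hdisj fun v _ => measurableSet_Aset Wk v k]
  case hdisj =>
    intro u hu v hv huv
    exact Aset_disjoint Wk (by simpa using hu) (by simpa using hv) huv
  rw [Finset.sum_congr rfl fun v hv => prob_Aset hd Wk hk hv, Finset.sum_const,
    paths_card k hk]
  have h2d : (1:ℕ) ≤ 2 * d := by omega
  have hcast : ((2 * d * (2 * d - 1) ^ (k - 1) : ℕ) : ℝ)
      = 2 * (d:ℝ) * (2 * (d:ℝ) - 1) ^ (k - 1) := by
    push_cast [h2d]
    ring
  have hd1 : (2 * (d:ℝ) - 1) ≠ 0 := by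
    have : (1:ℝ) ≤ (d:ℝ) := by exact_mod_cast hd
    nlinarith
  have hd0 : (2 * (d:ℝ)) ≠ 0 := by positivity
  have hp : (0:ℝ) ≤ (2 * (d : ℝ))⁻¹ * ((2 * (d : ℝ) - 1)⁻¹) ^ (k - 1) := by
    have : (1:ℝ) ≤ (d:ℝ) := by exact_mod_cast hd
    have h1 : (0:ℝ) ≤ (2 * (d:ℝ))⁻¹ := by positivity
    have h2 : (0:ℝ) < 2 * (d:ℝ) - 1 := by nlinarith
    positivity
  rw [nsmul_eq_mul, ← ENNReal.ofReal_natCast, ← ENNReal.ofReal_mul (by positivity), hcast]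
  rw [show (2 * (d:ℝ) * (2 * (d:ℝ) - 1) ^ (k - 1)) *
      ((2 * (d : ℝ))⁻¹ * ((2 * (d : ℝ) - 1)⁻¹) ^ (k - 1)) = 1 by
    rw [inv_pow]
    field_simp]
  exact ENNReal.ofReal_one

end MeasureLayer

section IntegralLayer
variable {d : ℕ} {Ω : Type} [MeasurableSpace Ω] {μ : Measure Ω} [IsProbabilityMeasure μ]

lemma integrable_inner_D (Wk : PersistentWalk d Ω μ) (m k : ℕ) :
    Integrable (fun ω => (inner ℝ (Wk.D m ω) (Wk.D k ω) : ℝ)) μ := by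
  refine Integrable.mono' (integrable_const 1)
    (((Wk.measD m).inner (Wk.measD k)).aestronglyMeasurable) (ae_of_all μ fun ω => ?_)
  rw [Real.norm_eq_abs]
  calc |(inner ℝ (Wk.D m ω) (Wk.D k ω) : ℝ)| ≤ ‖Wk.D m ω‖ * ‖Wk.D k ω‖ :=
    abs_real_inner_le_norm _ _
  _ = 1 := by rw [norm_D_eq_one, norm_D_eq_one, mul_one]

/-- `E ⟪D_m, D_{m+j}⟫ = (-1/(2d-1))^j`. -/
lemma integral_inner_D (hd : 1 ≤ d) (Wk : PersistentWalk d Ω μ) (m : ℕ) (hm : 1 ≤ m)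
    (j : ℕ) :
    ∫ ω, (inner ℝ (Wk.D m ω) (Wk.D (m + j) ω) : ℝ) ∂μ = (-1 / (2 * (d:ℝ) - 1)) ^ j := by
  classical
  set k := m + j with hk
  have hk1 : 1 ≤ k := by omega
  set U : Set Ω := ⋃ v ∈ paths d k, Aset Wk v k with hU
  have hUmeas : MeasurableSet U :=
    (paths d k).measurableSet_biUnion fun v _ => measurableSet_Aset Wk v k
  have hUc : μ Uᶜ = 0 := by
    rw [measure_compl hUmeas (measure_ne_top μ U), union_Aset_ae hd Wk hk1]
    simp
  have hint := integrable_inner_D Wk m k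
  rw [← integral_add_compl hUmeas hint]
  have hzero : ∫ ω in Uᶜ, (inner ℝ (Wk.D m ω) (Wk.D k ω) : ℝ) ∂μ = 0 := by
    rw [Measure.restrict_eq_zero.mpr hUc, integral_zero_measure]
  rw [hzero, add_zero, hU, integral_biUnion_finset (paths d k)
    (fun v _ => measurableSet_Aset Wk v k)
    (fun u hu v hv huv => Aset_disjoint Wk (by simpa using hu) (by simpa using hv) huv)
    (fun v _ => hint.integrableOn)]
  have hterm : ∀ v ∈ paths d k,
      ∫ ω in Aset Wk v k, (inner ℝ (Wk.D m ω) (Wk.D k ω) : ℝ) ∂μ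
      = (inner ℝ (v m) (v k) : ℝ) * ((2 * (d : ℝ))⁻¹ * ((2 * (d : ℝ) - 1)⁻¹) ^ (k - 1)) := by
    intro v hv
    have hconst : ∀ ω ∈ Aset Wk v k, (inner ℝ (Wk.D m ω) (Wk.D k ω) : ℝ) = (inner ℝ (v m) (v k) : ℝ) := by
      intro ω hω
      rw [hω m hm (by omega), hω k hk1 le_rfl]
    have hd2 : (1:ℝ) ≤ (d:ℝ) := by exact_mod_cast hd
    have h2 : (0:ℝ) < 2 * (d:ℝ) - 1 := by nlinarith
    have hp : (0:ℝ) ≤ (2 * (d : ℝ))⁻¹ * ((2 * (d : ℝ) - 1)⁻¹) ^ (k - 1) := by positivity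
    rw [setIntegral_congr_fun (measurableSet_Aset Wk v k) hconst, setIntegral_const,
      measureReal_def, prob_Aset hd Wk hk1 hv, ENNReal.toReal_ofReal hp, smul_eq_mul, mul_comm]
  rw [Finset.sum_congr rfl hterm, ← Finset.sum_mul, paths_inner_sum m hm j, paths_card m hm]
  -- algebra
  have hd2 : (1:ℝ) ≤ (d:ℝ) := by exact_mod_cast hd
  have h2 : (0:ℝ) < 2 * (d:ℝ) - 1 := by nlinarith
  have hd0 : (2 * (d:ℝ)) ≠ 0 := by positivity
  have h2d : (1:ℕ) ≤ 2 * d := by omega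
  have hcast : ((2 * d * (2 * d - 1) ^ (m - 1) : ℕ) : ℝ)
      = 2 * (d:ℝ) * (2 * (d:ℝ) - 1) ^ (m - 1) := by push_cast [h2d]; ring
  rw [hcast]
  have hexp : k - 1 = (m - 1) + j := by omega
  rw [hexp, pow_add, div_pow, inv_pow, inv_pow]
  have hne1 : ((2 * (d:ℝ) - 1) ^ (m-1)) ≠ 0 := pow_ne_zero _ (ne_of_gt h2)
  have hne2 : ((2 * (d:ℝ) - 1) ^ j) ≠ 0 := pow_ne_zero _ (ne_of_gt h2)
  field_simp

end IntegralLayer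

section Tlayer
variable {d : ℕ} {Ω : Type} [MeasurableSpace Ω] {μ : Measure Ω} [IsProbabilityMeasure μ]
variable (Wk : PersistentWalk d Ω μ)

lemma identT (m : ℕ) (hm : 1 ≤ m) :
    IdentDistrib (fun ω => (Wk.T m ω : ℝ)) (fun ω => (Wk.T 1 ω : ℝ)) μ μ := by
  have h := (Wk.T_ident (m - 1)).comp (measurable_from_top (f := fun t : ℕ => (t:ℝ)))
  have hm1 : m - 1 + 1 = m := by omega
  rw [hm1] at h
  exact h

lemma identT2 (m : ℕ) (hm : 1 ≤ m) :
    IdentDistrib (fun ω => (Wk.T m ω : ℝ)^2) (fun ω => (Wk.T 1 ω : ℝ)^2) μ μ := by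
  have h := (Wk.T_ident (m - 1)).comp (measurable_from_top (f := fun t : ℕ => (t:ℝ)^2))
  have hm1 : m - 1 + 1 = m := by omega
  rw [hm1] at h
  exact h


lemma integrable_T2 (hT2 : Integrable (fun ω => (Wk.T 1 ω : ℝ) ^ 2) μ) (m : ℕ) (hm : 1 ≤ m) :
    Integrable (fun ω => (Wk.T m ω : ℝ)^2) μ := (identT2 Wk m hm).integrable_iff.2 hT2

lemma integrable_T (hT2 : Integrable (fun ω => (Wk.T 1 ω : ℝ) ^ 2) μ) (m : ℕ) (hm : 1 ≤ m) : Integrable (fun ω => (Wk.T m ω : ℝ)) μ := by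
  refine Integrable.mono' (integrable_T2 Wk hT2 m hm)
    ((measurable_from_top.comp (Wk.measT m)).aestronglyMeasurable) (ae_of_all μ fun ω => ?_)
  have h1 : (1:ℝ) ≤ (Wk.T m ω : ℝ) := by exact_mod_cast Wk.T_pos m ω
  rw [Real.norm_eq_abs, abs_of_nonneg (by linarith)]
  nlinarith

lemma integral_T (m : ℕ) (hm : 1 ≤ m) : ∫ ω, (Wk.T m ω : ℝ) ∂μ = Wk.ET :=
  (identT Wk m hm).integral_eq

lemma integral_T2 (m : ℕ) (hm : 1 ≤ m) : ∫ ω, (Wk.T m ω : ℝ)^2 ∂μ = Wk.ET2 :=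
  (identT2 Wk m hm).integral_eq

lemma indepT (m k : ℕ) (hm : 1 ≤ m) (hk : 1 ≤ k) (hmk : m ≠ k) :
    IndepFun (fun ω => (Wk.T m ω : ℝ)) (fun ω => (Wk.T k ω : ℝ)) μ := by
  have h := (Wk.T_iid.indepFun (i := m - 1) (j := k - 1) (by omega)).comp
    (measurable_from_top (f := fun t : ℕ => (t:ℝ)))
    (measurable_from_top (f := fun t : ℕ => (t:ℝ)))
  have hm1 : m - 1 + 1 = m := by omega
  have hk1 : k - 1 + 1 = k := by omega
  rw [hm1, hk1] at h
  exact h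

lemma integrable_TT (hT2 : Integrable (fun ω => (Wk.T 1 ω : ℝ) ^ 2) μ) (m k : ℕ) (hm : 1 ≤ m) (hk : 1 ≤ k) :
    Integrable (fun ω => (Wk.T m ω : ℝ) * (Wk.T k ω : ℝ)) μ := by
  rcases eq_or_ne m k with rfl | hmk
  · have := integrable_T2 Wk hT2 m hm
    simpa [pow_two] using this
  · exact (indepT Wk m k hm hk hmk).integrable_mul
      (integrable_T Wk hT2 m hm) (integrable_T Wk hT2 k hk)

lemma integral_TT (hT2 : Integrable (fun ω => (Wk.T 1 ω : ℝ) ^ 2) μ) (m k : ℕ) (hm : 1 ≤ m) (hk : 1 ≤ k) :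
    ∫ ω, (Wk.T m ω : ℝ) * (Wk.T k ω : ℝ) ∂μ
      = if m = k then Wk.ET2 else Wk.ET ^ 2 := by
  rcases eq_or_ne m k with rfl | hmk
  · rw [if_pos rfl, ← integral_T2 Wk m hm]
    simp [pow_two]
  · have h := (indepT Wk m k hm hk hmk).integral_mul_eq_mul_integral
        (integrable_T Wk hT2 m hm).aestronglyMeasurable
        (integrable_T Wk hT2 k hk).aestronglyMeasurable
    rw [if_neg hmk, show (∫ ω, (Wk.T m ω : ℝ) * (Wk.T k ω : ℝ) ∂μ)
        = integral μ ((fun ω => (Wk.T m ω : ℝ)) * fun ω => (Wk.T k ω : ℝ)) from rfl, h,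
      integral_T Wk m hm, integral_T Wk k hk]
    ring

lemma indep_DT_term (m k : ℕ) :
    IndepFun (fun ω => (inner ℝ (Wk.D m ω) (Wk.D k ω) : ℝ))
      (fun ω => (Wk.T m ω : ℝ) * (Wk.T k ω : ℝ)) μ := by
  have h := Wk.DT_indep.comp
    (φ := fun f : ℕ → EuclideanSpace ℝ (Fin d) => (inner ℝ (f m) (f k) : ℝ))
    (ψ := fun g : ℕ → ℕ => (g m : ℝ) * (g k : ℝ))
    ((measurable_pi_apply m).inner (measurable_pi_apply k))
    ((measurable_from_top.comp (measurable_pi_apply m)).mul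
      (measurable_from_top.comp (measurable_pi_apply k)))
  exact h

lemma integrable_term (hT2 : Integrable (fun ω => (Wk.T 1 ω : ℝ) ^ 2) μ) (m k : ℕ) (hm : 1 ≤ m) (hk : 1 ≤ k) :
    Integrable (fun ω => (Wk.T m ω : ℝ) * (Wk.T k ω : ℝ)
      * (inner ℝ (Wk.D m ω) (Wk.D k ω) : ℝ)) μ := by
  refine Integrable.mono' (integrable_TT Wk hT2 m k hm hk)
    ?_ (ae_of_all μ fun ω => ?_)
  · exact ((measurable_from_top.comp (Wk.measT m)).mul
      (measurable_from_top.comp (Wk.measT k))).aestronglyMeasurable.mul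
      (((Wk.measD m).inner (Wk.measD k)).aestronglyMeasurable)
  · have h1 : (1:ℝ) ≤ (Wk.T m ω : ℝ) := by exact_mod_cast Wk.T_pos m ω
    have h2 : (1:ℝ) ≤ (Wk.T k ω : ℝ) := by exact_mod_cast Wk.T_pos k ω
    have hI : |(inner ℝ (Wk.D m ω) (Wk.D k ω) : ℝ)| ≤ 1 := by
      calc |(inner ℝ (Wk.D m ω) (Wk.D k ω) : ℝ)| ≤ ‖Wk.D m ω‖ * ‖Wk.D k ω‖ :=
        abs_real_inner_le_norm _ _
      _ = 1 := by rw [norm_D_eq_one, norm_D_eq_one, mul_one]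
    rw [Real.norm_eq_abs, abs_mul, abs_mul, abs_of_nonneg (by linarith),
      abs_of_nonneg (by linarith)]
    have hTT : (0:ℝ) ≤ (Wk.T m ω : ℝ) * (Wk.T k ω : ℝ) := by positivity
    exact (mul_le_mul_of_nonneg_left hI hTT).trans_eq (mul_one _)

/-- The per-term expectation, `m ≤ k` case. -/
lemma integral_term_le (hT2 : Integrable (fun ω => (Wk.T 1 ω : ℝ) ^ 2) μ) (hd : 1 ≤ d) (m k : ℕ) (hm : 1 ≤ m) (hmk : m ≤ k) :
    ∫ ω, (Wk.T m ω : ℝ) * (Wk.T k ω : ℝ) * (inner ℝ (Wk.D m ω) (Wk.D k ω) : ℝ) ∂μ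
      = (if m = k then Wk.ET2 else Wk.ET ^ 2) * (-1 / (2 * (d:ℝ) - 1)) ^ (k - m) := by
  have hk : 1 ≤ k := le_trans hm hmk
  have h := (indep_DT_term Wk m k).integral_mul_eq_mul_integral
    (integrable_inner_D Wk m k).aestronglyMeasurable
    (integrable_TT Wk hT2 m k hm hk).aestronglyMeasurable
  have hrw : (fun ω => (Wk.T m ω : ℝ) * (Wk.T k ω : ℝ) * (inner ℝ (Wk.D m ω) (Wk.D k ω) : ℝ))
      = ((fun ω => (inner ℝ (Wk.D m ω) (Wk.D k ω) : ℝ))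
        * fun ω => (Wk.T m ω : ℝ) * (Wk.T k ω : ℝ)) := by
    funext ω; simp only [Pi.mul_apply]; ring
  rw [show (∫ ω, (Wk.T m ω : ℝ) * (Wk.T k ω : ℝ) * (inner ℝ (Wk.D m ω) (Wk.D k ω) : ℝ) ∂μ)
      = integral μ ((fun ω => (inner ℝ (Wk.D m ω) (Wk.D k ω) : ℝ))
        * fun ω => (Wk.T m ω : ℝ) * (Wk.T k ω : ℝ)) from congrArg (integral μ) hrw, h]
  have hj : k = m + (k - m) := by omega
  have hD : ∫ ω, (inner ℝ (Wk.D m ω) (Wk.D k ω) : ℝ) ∂μ = (-1 / (2 * (d:ℝ) - 1)) ^ (k - m) := by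
    conv_lhs => rw [hj]
    exact integral_inner_D hd Wk m hm (k - m)
  rw [integral_TT Wk hT2 m k hm hk, hD]
  ring

lemma integral_term_sym (hT2 : Integrable (fun ω => (Wk.T 1 ω : ℝ) ^ 2) μ) (hd : 1 ≤ d)
    (m k : ℕ) (hm : 1 ≤ m) (hk : 1 ≤ k) :
    ∫ ω, (Wk.T m ω : ℝ) * (Wk.T k ω : ℝ) * (inner ℝ (Wk.D m ω) (Wk.D k ω) : ℝ) ∂μ
      = (if m = k then Wk.ET2 else Wk.ET ^ 2)
        * (-1 / (2 * (d:ℝ) - 1)) ^ ((k - m) + (m - k)) := by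
  rcases le_total m k with hle | hle
  · have he : (k - m) + (m - k) = k - m := by omega
    rw [he]
    exact integral_term_le Wk hT2 hd m k hm hle
  · have he : (k - m) + (m - k) = m - k := by omega
    have hsymm : (fun ω => (Wk.T m ω : ℝ) * (Wk.T k ω : ℝ) * (inner ℝ (Wk.D m ω) (Wk.D k ω) : ℝ))
        = fun ω => (Wk.T k ω : ℝ) * (Wk.T m ω : ℝ) * (inner ℝ (Wk.D k ω) (Wk.D m ω) : ℝ) := by
      funext ω; rw [real_inner_comm]; ring
    rw [he, show (∫ ω, (Wk.T m ω : ℝ) * (Wk.T k ω : ℝ) * (inner ℝ (Wk.D m ω) (Wk.D k ω) : ℝ) ∂μ)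
      = ∫ ω, (Wk.T k ω : ℝ) * (Wk.T m ω : ℝ) * (inner ℝ (Wk.D k ω) (Wk.D m ω) : ℝ) ∂μ
      from congrArg (integral μ) hsymm, integral_term_le Wk hT2 hd k m hk hle]
    congr 1
    by_cases hmk : m = k <;> simp [hmk, eq_comm]

lemma norm_W_sq (n : ℕ) (ω : Ω) :
    ‖Wk.W n ω‖ ^ 2 = ∑ m ∈ Finset.Icc 1 n, ∑ k ∈ Finset.Icc 1 n,
      (Wk.T m ω : ℝ) * (Wk.T k ω : ℝ) * (inner ℝ (Wk.D m ω) (Wk.D k ω) : ℝ) := by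
  rw [← real_inner_self_eq_norm_sq]
  simp only [PersistentWalk.W, sum_inner, inner_sum, real_inner_smul_left,
    real_inner_smul_right]
  refine Finset.sum_congr rfl fun m _ => Finset.sum_congr rfl fun k _ => by
    rw [real_inner_comm (Wk.D k ω) (Wk.D m ω)]; ring

end Tlayer

section Algebra

lemma geom_helper (r : ℝ) : ∀ n : ℕ, (1 - r) * (∑ j ∈ Finset.Icc 1 n, r ^ j) = r - r ^ (n+1)
  | 0 => by simp
  | (n+1) => by
    rw [Finset.sum_Icc_succ_top (by omega), mul_add, geom_helper r n]
    ring

lemma reindex_geom (r : ℝ) (n : ℕ) :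
    ∑ m ∈ Finset.Icc 1 n, r ^ (n + 1 - m) = ∑ j ∈ Finset.Icc 1 n, r ^ j := by
  refine Finset.sum_nbij' (fun m => n + 1 - m) (fun j => n + 1 - j) ?_ ?_ ?_ ?_ ?_ <;>
    intro a ha <;> simp only [Finset.mem_Icc] at * <;>
    first
      | omega
      | (rw [show n + 1 - (n + 1 - a) = a by omega])

/-- The purely algebraic evaluation of the double sum. -/
lemma sum_formula (d : ℕ) (hd : 1 ≤ d) (a b : ℝ) : ∀ n : ℕ, 1 ≤ n →
    (∑ m ∈ Finset.Icc 1 n, ∑ k ∈ Finset.Icc 1 n,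
      (if m = k then a else b * (-1 / (2 * (d:ℝ) - 1)) ^ ((k - m) + (m - k))))
    = n * a - b * ((n : ℝ) / d
        + ((2 * (d:ℝ) - 1) / (2 * (d:ℝ) ^ 2)) * ((-1 / (2 * (d:ℝ) - 1)) ^ n - 1)) := by
  have hd1 : (1:ℝ) ≤ (d:ℝ) := by exact_mod_cast hd
  have h2 : (0:ℝ) < 2 * (d:ℝ) - 1 := by nlinarith
  set r : ℝ := -1 / (2 * (d:ℝ) - 1) with hr
  have h1r : 1 - r = 2 * (d:ℝ) / (2 * (d:ℝ) - 1) := by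
    rw [hr]; field_simp; ring
  intro n
  induction n with
  | zero => omega
  | succ n ih =>
    intro _
    rcases Nat.eq_zero_or_pos n with rfl | hn
    · simp only [Finset.Icc_self, Finset.sum_singleton, if_pos rfl]
      rw [hr]
      push_cast
      have h20 : (2 * (d:ℝ) - 1) ≠ 0 := ne_of_gt h2
      rw [div_pow]
      have h20' : (d:ℝ) * 2 - 1 ≠ 0 := ne_of_gt (by linarith)
      field_simp
      ring
    · -- split off the last row and column
      have hsplit : ∀ m, (∑ k ∈ Finset.Icc 1 (n+1),
          (if m = k then a else b * r ^ ((k - m) + (m - k))))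
          = (∑ k ∈ Finset.Icc 1 n, (if m = k then a else b * r ^ ((k - m) + (m - k))))
            + (if m = n+1 then a else b * r ^ ((n+1 - m) + (m - (n+1)))) := by
        intro m
        rw [Finset.sum_Icc_succ_top (by omega)]
      rw [Finset.sum_Icc_succ_top (by omega : 1 ≤ n + 1), Finset.sum_congr rfl
        fun m _ => hsplit m, Finset.sum_add_distrib, hsplit (n+1), ih hn]
      have hrow : ∑ m ∈ Finset.Icc 1 n, (if m = n+1 then a else b * r ^ ((n+1 - m) + (m - (n+1))))
          = b * ∑ m ∈ Finset.Icc 1 n, r ^ (n + 1 - m) := by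
        rw [Finset.mul_sum]
        refine Finset.sum_congr rfl fun m hm => ?_
        simp only [Finset.mem_Icc] at hm
        rw [if_neg (by omega), show (n+1 - m) + (m - (n+1)) = n + 1 - m by omega]
      have hcol : ∑ k ∈ Finset.Icc 1 n, (if n+1 = k then a else b * r ^ ((k - (n+1)) + (n+1 - k)))
          = b * ∑ m ∈ Finset.Icc 1 n, r ^ (n + 1 - m) := by
        rw [Finset.mul_sum]
        refine Finset.sum_congr rfl fun m hm => ?_
        simp only [Finset.mem_Icc] at hm
        rw [if_neg (by omega), show (m - (n+1)) + (n+1 - m) = n + 1 - m by omega]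
      rw [hrow, hcol, if_pos rfl, reindex_geom]
      have hG := geom_helper r n
      have h1r0 : (1 : ℝ) - r ≠ 0 := by
        rw [h1r]; positivity
      have hGval : (∑ j ∈ Finset.Icc 1 n, r ^ j) = (r - r ^ (n+1)) / (1 - r) := by
        field_simp
        linarith [hG]
      rw [hGval]
      have hd0 : (d:ℝ) ≠ 0 := by positivity
      have h20 : (2 * (d:ℝ) - 1) ≠ 0 := ne_of_gt h2
      have hpow : r ^ (n+1) = r * r ^ n := by ring
      push_cast
      rw [h1r, hpow, hr, div_pow]
      have h20' : (d:ℝ) * 2 - 1 ≠ 0 := ne_of_gt (by linarith)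
      field_simp
      ring

end Algebra


/-- If `E(T²) < ∞`, then for every `n ≥ 1`,
`E(|W^p_n|²) = n E(T²) - E(T)² (n/d + ((2d-1)/(2d²)) ((-1/(2d-1))^n - 1))`. -/
theorem persistent_second_moment_formula
    {d : ℕ} (hd : 1 ≤ d) {Ω : Type} [MeasurableSpace Ω] {μ : Measure Ω}
    [IsProbabilityMeasure μ] (Wk : PersistentWalk d Ω μ)
    (hT2 : Integrable (fun ω => (Wk.T 1 ω : ℝ) ^ 2) μ) :
    ∀ n : ℕ, 1 ≤ n →
      ∫ ω, ‖Wk.W n ω‖ ^ 2 ∂μ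
        = (n : ℝ) * Wk.ET2
          - Wk.ET ^ 2 * ((n : ℝ) / d
            + ((2 * (d : ℝ) - 1) / (2 * (d : ℝ) ^ 2))
              * ((-1 / (2 * (d : ℝ) - 1)) ^ n - 1)) := by
  intro n hn
  have hexp : (∫ ω, ‖Wk.W n ω‖ ^ 2 ∂μ)
      = ∫ ω, ∑ m ∈ Finset.Icc 1 n, ∑ k ∈ Finset.Icc 1 n,
          (Wk.T m ω : ℝ) * (Wk.T k ω : ℝ) * (inner ℝ (Wk.D m ω) (Wk.D k ω) : ℝ) ∂μ :=
    congrArg (integral μ) (funext fun ω => norm_W_sq Wk n ω)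
  rw [hexp, integral_finset_sum _ fun m hm => integrable_finset_sum _ fun k hk =>
    integrable_term Wk hT2 m k (Finset.mem_Icc.1 hm).1 (Finset.mem_Icc.1 hk).1]
  rw [Finset.sum_congr rfl fun m hm => integral_finset_sum _ fun k hk =>
    integrable_term Wk hT2 m k (Finset.mem_Icc.1 hm).1 (Finset.mem_Icc.1 hk).1]
  rw [Finset.sum_congr rfl fun m hm => Finset.sum_congr rfl fun k hk =>
    integral_term_sym Wk hT2 hd m k (Finset.mem_Icc.1 hm).1 (Finset.mem_Icc.1 hk).1]
  rw [Finset.sum_congr rfl fun m _ => Finset.sum_congr rfl fun k _ => show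
    (if m = k then Wk.ET2 else Wk.ET ^ 2) * (-1 / (2 * (d:ℝ) - 1)) ^ ((k - m) + (m - k))
      = (if m = k then Wk.ET2 else Wk.ET ^ 2 * (-1 / (2 * (d:ℝ) - 1)) ^ ((k - m) + (m - k)))
    from by
      rcases eq_or_ne m k with rfl | hne
      · simp
      · simp [hne]]
  exact sum_formula d hd Wk.ET2 (Wk.ET ^ 2) n hn
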